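/- For every 1 ≤ k ≤ n−1, the ideal I = I_{L_k} satisfies I = (I + (x_{k+1} − y_k)) ∩ (I + (z)), where (I + (x_{k+1} − y_k)) and (I + (z)) denote the ideals of S generated by I together with x_{k+1} − y_k, respectively together with z. -/

import Mathlib

open MvPolynomial

/-- The variable `x_i` (for `1 ≤ i ≤ n`) of the polynomial ring
`S = K[x_1,…,x_n, y_1,…,y_n, z]` in `2n+1` variables. -/
noncomputable def xv (K : Type*) [Field K] (n i : ℕ) :
    MvPolynomial (Fin n ⊕ Fin n ⊕ Unit) K :=
  if h : 1 ≤ i ∧ i ≤ n then X (Sum.inl ⟨i - 1, by omega⟩) else 0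

/-- The variable `y_i` (for `1 ≤ i ≤ n`) of `S = K[x_1,…,x_n, y_1,…,y_n, z]`. -/
noncomputable def yv (K : Type*) [Field K] (n i : ℕ) :
    MvPolynomial (Fin n ⊕ Fin n ⊕ Unit) K :=
  if h : 1 ≤ i ∧ i ≤ n then X (Sum.inr (Sum.inl ⟨i - 1, by omega⟩)) else 0

/-- The variable `z` of `S = K[x_1,…,x_n, y_1,…,y_n, z]`. -/
noncomputable def zv (K : Type*) [Field K] (n : ℕ) :
    MvPolynomial (Fin n ⊕ Fin n ⊕ Unit) K :=
  X (Sum.inr (Sum.inr ()))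

/-- The join-meet ideal `I = I_{L_k} ⊆ K[x_1,…,x_n, y_1,…,y_n, z]`, generated by the binomials
`x_j·y_i − x_i·y_j` for `1 ≤ i < j ≤ n`, `z·x_j − x_k·y_j` for `k+1 ≤ j ≤ n`, and
`z·y_i − x_i·y_{k+1}` for `1 ≤ i ≤ k`. -/
noncomputable def LkIdeal (K : Type*) [Field K] (n k : ℕ) :
    Ideal (MvPolynomial (Fin n ⊕ Fin n ⊕ Unit) K) :=
  Ideal.span
    ({f | ∃ i j : ℕ, 1 ≤ i ∧ i < j ∧ j ≤ n ∧
        f = xv K n j * yv K n i - xv K n i * yv K n j} ∪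
      {f | ∃ j : ℕ, k + 1 ≤ j ∧ j ≤ n ∧
        f = zv K n * xv K n j - xv K n k * yv K n j} ∪
      {f | ∃ i : ℕ, 1 ≤ i ∧ i ≤ k ∧
        f = zv K n * yv K n i - xv K n i * yv K n (k + 1)})


open MvPolynomial

namespace LkAux

variable {K : Type*} [Field K] {n : ℕ}

/-- index of `x i` -/
def xc {n : ℕ} (i : Fin n) : Fin n ⊕ Fin n ⊕ Unit := Sum.inl i
/-- index of `y i` -/
def yc {n : ℕ} (i : Fin n) : Fin n ⊕ Fin n ⊕ Unit := Sum.inr (Sum.inl i)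
/-- index of `z` -/
def zc {n : ℕ} : Fin n ⊕ Fin n ⊕ Unit := Sum.inr (Sum.inr ())

noncomputable def xx (K : Type*) [Field K] {n : ℕ} (i : Fin n) :
    MvPolynomial (Fin n ⊕ Fin n ⊕ Unit) K := X (xc i)
noncomputable def yy (K : Type*) [Field K] {n : ℕ} (i : Fin n) :
    MvPolynomial (Fin n ⊕ Fin n ⊕ Unit) K := X (yc i)
noncomputable def zz (K : Type*) [Field K] (n : ℕ) :
    MvPolynomial (Fin n ⊕ Fin n ⊕ Unit) K := X (zc)

/-- The generating set of the auxiliary ideal `IE` (the image of the ideal `I` under the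
substitution `x_b ↦ y_a`, suitably enlarged). -/
def Eset (K : Type*) [Field K] {n : ℕ} (a b : Fin n) :
    Set (MvPolynomial (Fin n ⊕ Fin n ⊕ Unit) K) :=
  {f | (∃ i j : Fin n, i < j ∧ i ≠ b ∧ j ≠ b ∧ f = xx K j * yy K i - xx K i * yy K j) ∨
       (∃ i, i ≤ a ∧ f = yy K a * yy K i - xx K i * yy K b) ∨
       (∃ j, b < j ∧ f = xx K j * yy K b - yy K a * yy K j) ∨
       (∃ j, b < j ∧ f = zz K n * xx K j - xx K a * yy K j) ∨
       (∃ i, i ≤ a ∧ f = zz K n * yy K i - xx K i * yy K b)}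

noncomputable def IE (K : Type*) [Field K] {n : ℕ} (a b : Fin n) :
    Ideal (MvPolynomial (Fin n ⊕ Fin n ⊕ Unit) K) := Ideal.span (Eset K a b)

/-- substitution `x_b ↦ y_a` -/
noncomputable def tauf (K : Type*) [Field K] {n : ℕ} (a b : Fin n) :
    MvPolynomial (Fin n ⊕ Fin n ⊕ Unit) K →ₐ[K] MvPolynomial (Fin n ⊕ Fin n ⊕ Unit) K :=
  aeval (fun s => match s with
    | .inl i => if i = b then yy K a else xx K i
    | s => X s)

noncomputable def psi2 (K : Type*) [Field K] {n : ℕ} (a b : Fin n) :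
    MvPolynomial (Fin n ⊕ Fin n ⊕ Unit) K →ₐ[K] MvPolynomial (Fin n ⊕ Fin n ⊕ Unit) K :=
  aeval (fun s => match s with
    | .inl i => if i ≤ a ∨ i = b then xx K i else 0
    | .inr (.inl _) => 0
    | .inr (.inr _) => zz K n)

noncomputable def psi3 (K : Type*) [Field K] {n : ℕ} (a b : Fin n) :
    MvPolynomial (Fin n ⊕ Fin n ⊕ Unit) K →ₐ[K] MvPolynomial (Fin n ⊕ Fin n ⊕ Unit) K :=
  aeval (fun s => match s with
    | .inl i => if i = b then xx K i else 0
    | .inr (.inl i) => if a < i then yy K i else 0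
    | .inr (.inr _) => zz K n)

/-- exponent vectors of the toric parametrization: target variables are
`s = inl 0, p = inl 1, q = inl 2, r = inl 3`, `v i = inr i`. -/
noncomputable def wexp {n : ℕ} (a b : Fin n) : (Fin n ⊕ Fin n ⊕ Unit) → ((Fin 4 ⊕ Fin n) →₀ ℕ)
  | .inl i => if i = b then Finsupp.single (.inr b) 1 else
      if i = a then Finsupp.single (.inl 0) 1 + (Finsupp.single (.inl 1) 1 + Finsupp.single (.inl 1) 1) + Finsupp.single (.inl 3) 1
      else Finsupp.single (.inl 0) 1 + Finsupp.single (.inl 1) 1 + Finsupp.single (.inr i) 1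
  | .inr (.inl i) => if i = a then
        Finsupp.single (.inl 0) 1 + Finsupp.single (.inl 1) 1 + Finsupp.single (.inl 2) 1 +
          Finsupp.single (.inl 3) 1
      else if i = b then
        Finsupp.single (.inl 0) 1 + (Finsupp.single (.inl 2) 1 + Finsupp.single (.inl 2) 1) + Finsupp.single (.inl 3) 1
      else Finsupp.single (.inl 0) 1 + Finsupp.single (.inl 2) 1 + Finsupp.single (.inr i) 1
  | .inr (.inr _) =>
      Finsupp.single (.inl 0) 1 + Finsupp.single (.inl 1) 1 + Finsupp.single (.inl 2) 1 +
        Finsupp.single (.inl 3) 1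

noncomputable def psi1 (K : Type*) [Field K] {n : ℕ} (a b : Fin n) :
    MvPolynomial (Fin n ⊕ Fin n ⊕ Unit) K →ₐ[K] MvPolynomial (Fin 4 ⊕ Fin n) K :=
  aeval (fun s => monomial (wexp a b s) 1)

noncomputable def Wm {n : ℕ} (a b : Fin n) (m : (Fin n ⊕ Fin n ⊕ Unit) →₀ ℕ) :
    (Fin 4 ⊕ Fin n) →₀ ℕ :=
  m.sum fun s e => e • wexp a b s

/-- standard monomials -/
def StdP {n : ℕ} (a b : Fin n) (m : (Fin n ⊕ Fin n ⊕ Unit) →₀ ℕ) : Prop :=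
  (∀ p q : Fin n, p ≠ b → q ≠ b → 0 < m (xc p) → 0 < m (yc q) → p ≤ q) ∧
  (0 < m (yc b) → ∀ p, p ≠ b → m (xc p) = 0) ∧
  (0 < m (zc) → ∀ q, q ≤ a → m (yc q) = 0) ∧
  (0 < m (zc) → ∀ p, b < p → m (xc p) = 0) ∧
  (0 < m (zc) → (∀ p, p ≤ a → m (xc p) = 0) ∨ (∀ q, b < q → m (yc q) = 0))

def stdOK {K : Type*} [Field K] {n : ℕ} (a b : Fin n)
    (f : MvPolynomial (Fin n ⊕ Fin n ⊕ Unit) K) : Prop :=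
  ∀ m ∈ f.support, StdP a b m

/-- termination measure for straightening -/
def μm {n : ℕ} (m : (Fin n ⊕ Fin n ⊕ Unit) →₀ ℕ) : ℕ :=
  m zc + ∑ i : Fin n, m (xc i) * (i.val + 2)

end LkAux
section Chunk2
open MvPolynomial LkAux

namespace LkAux
variable {K : Type*} [Field K] {n : ℕ} {a b : Fin n}

lemma mem_IE_E1 {i j : Fin n} (h : i < j) (hi : i ≠ b) (hj : j ≠ b) :
    xx K j * yy K i - xx K i * yy K j ∈ IE K a b :=
  Ideal.subset_span (Or.inl ⟨i, j, h, hi, hj, rfl⟩)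

lemma mem_IE_E2 {i : Fin n} (h : i ≤ a) :
    yy K a * yy K i - xx K i * yy K b ∈ IE K a b :=
  Ideal.subset_span (Or.inr (Or.inl ⟨i, h, rfl⟩))

lemma mem_IE_E3 {j : Fin n} (h : b < j) :
    xx K j * yy K b - yy K a * yy K j ∈ IE K a b :=
  Ideal.subset_span (Or.inr (Or.inr (Or.inl ⟨j, h, rfl⟩)))

lemma mem_IE_E4 {j : Fin n} (h : b < j) :
    zz K n * xx K j - xx K a * yy K j ∈ IE K a b :=
  Ideal.subset_span (Or.inr (Or.inr (Or.inr (Or.inl ⟨j, h, rfl⟩))))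

lemma mem_IE_E5 {i : Fin n} (h : i ≤ a) :
    zz K n * yy K i - xx K i * yy K b ∈ IE K a b :=
  Ideal.subset_span (Or.inr (Or.inr (Or.inr (Or.inr ⟨i, h, rfl⟩))))

lemma mem_IE_zy {i : Fin n} (h : i ≤ a) :
    zz K n * yy K i - yy K a * yy K i ∈ IE K a b := by
  have h2 := sub_mem (mem_IE_E5 (K := K) (a := a) (b := b) h) (mem_IE_E2 (K := K) h)
  convert h2 using 1; ring

lemma mem_IE_xya {p : Fin n} (hp : p ≤ a) (hb : p ≠ b) (hab : a ≠ b) :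
    xx K a * yy K p - xx K p * yy K a ∈ IE K a b := by
  rcases eq_or_lt_of_le hp with rfl | hlt
  · simp
  · exact mem_IE_E1 hlt hb hab

lemma mem_IE_zxy {p q : Fin n} (hp : p ≤ a) (hq : b < q) (hab : a < b) :
    zz K n * (xx K p * yy K q) - yy K a * (xx K p * yy K q) ∈ IE K a b := by
  have hpb : p ≠ b := by
    intro e; rw [e] at hp; exact absurd (lt_of_lt_of_le hab hp) (lt_irrefl _)
  have hqb : q ≠ b := ne_of_gt hq
  have h1 : xx K q * yy K p - xx K p * yy K q ∈ IE K a b :=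
    mem_IE_E1 (lt_of_le_of_lt hp (lt_trans hab hq)) hpb hqb
  have h4 : zz K n * xx K q - xx K a * yy K q ∈ IE K a b := mem_IE_E4 hq
  have h5 : xx K a * yy K p - xx K p * yy K a ∈ IE K a b := mem_IE_xya hp hpb (ne_of_lt hab)
  have mem : (-(zz K n)) * (xx K q * yy K p - xx K p * yy K q) +
      (yy K p * (zz K n * xx K q - xx K a * yy K q) +
       yy K q * (xx K a * yy K p - xx K p * yy K a)) ∈ IE K a b :=
    add_mem (Ideal.mul_mem_left _ _ h1) (add_mem (Ideal.mul_mem_left _ _ h4)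
      (Ideal.mul_mem_left _ _ h5))
  convert mem using 1; ring

end LkAux
end Chunk2
section Chunk3
open MvPolynomial LkAux

namespace LkAux
variable {K : Type*} [Field K] {n : ℕ} {a b : Fin n}

@[simp] lemma tau_xx (i : Fin n) :
    tauf K a b (xx K i) = if i = b then yy K a else xx K i := by
  simp [tauf, xx, xc, yy, yc]
@[simp] lemma tau_yy (i : Fin n) : tauf K a b (yy K i) = yy K i := by
  simp [tauf, yy, yc]
@[simp] lemma tau_zz : tauf K a b (zz K n) = zz K n := by
  simp [tauf, zz, zc]

@[simp] lemma psi2_xx (i : Fin n) :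
    psi2 K a b (xx K i) = if i ≤ a ∨ i = b then xx K i else 0 := by
  simp [psi2, xx, xc]
@[simp] lemma psi2_yy (i : Fin n) : psi2 K a b (yy K i) = 0 := by
  simp [psi2, yy, yc]
@[simp] lemma psi2_zz : psi2 K a b (zz K n) = zz K n := by
  simp [psi2, zz, zc]

@[simp] lemma psi3_xx (i : Fin n) :
    psi3 K a b (xx K i) = if i = b then xx K i else 0 := by
  simp [psi3, xx, xc]
@[simp] lemma psi3_yy (i : Fin n) :
    psi3 K a b (yy K i) = if a < i then yy K i else 0 := by
  simp [psi3, yy, yc]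
@[simp] lemma psi3_zz : psi3 K a b (zz K n) = zz K n := by
  simp [psi3, zz, zc]

@[simp] lemma psi1_X (s : Fin n ⊕ Fin n ⊕ Unit) :
    psi1 K a b (X s) = monomial (wexp a b s) 1 := aeval_X _ _

lemma psi1_XX (s t : Fin n ⊕ Fin n ⊕ Unit) :
    psi1 K a b (X s * X t) = monomial (wexp a b s + wexp a b t) (1 : K) := by
  rw [map_mul, psi1_X, psi1_X, monomial_mul, one_mul]

end LkAux
end Chunk3
section Chunk4
open MvPolynomial LkAux

namespace LkAux
variable {K : Type*} [Field K] {n : ℕ} {a b : Fin n}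

lemma psi2_vanish (hab : a < b) {f : MvPolynomial (Fin n ⊕ Fin n ⊕ Unit) K}
    (hf : f ∈ IE K a b) : psi2 K a b f = 0 := by
  have h : IE K a b ≤ RingHom.ker (psi2 K a b).toRingHom := by
    rw [IE, Ideal.span_le]
    rintro f (⟨i, j, hij, hi, hj, rfl⟩ | ⟨i, hi, rfl⟩ | ⟨j, hj, rfl⟩ | ⟨j, hj, rfl⟩ |
      ⟨i, hi, rfl⟩) <;>
      simp only [SetLike.mem_coe, RingHom.mem_ker, AlgHom.toRingHom_eq_coe,
        RingHom.coe_coe, map_sub, map_mul, psi2_xx, psi2_yy, psi2_zz]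
    · ring
    · ring
    · ring
    · have h1 : ¬(j ≤ a ∨ j = b) := by
        rintro (h | rfl)
        · exact absurd (lt_trans hab hj) (not_lt.mpr h)
        · exact lt_irrefl _ hj
      rw [if_neg h1]; ring
    · ring
  exact RingHom.mem_ker.mp (h hf)

lemma psi3_vanish (hab : a < b) {f : MvPolynomial (Fin n ⊕ Fin n ⊕ Unit) K}
    (hf : f ∈ IE K a b) : psi3 K a b f = 0 := by
  have h : IE K a b ≤ RingHom.ker (psi3 K a b).toRingHom := by
    rw [IE, Ideal.span_le]
    rintro f (⟨i, j, hij, hi, hj, rfl⟩ | ⟨i, hi, rfl⟩ | ⟨j, hj, rfl⟩ | ⟨j, hj, rfl⟩ |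
      ⟨i, hi, rfl⟩) <;>
      simp only [SetLike.mem_coe, RingHom.mem_ker, AlgHom.toRingHom_eq_coe,
        RingHom.coe_coe, map_sub, map_mul, psi3_xx, psi3_yy, psi3_zz]
    · rw [if_neg hi, if_neg hj]; ring
    · have h1 : i ≠ b := fun e => absurd (e ▸ hi) (not_le.mpr hab)
      rw [if_neg h1, if_neg (lt_irrefl a)]; ring
    · rw [if_neg (ne_of_gt hj), if_neg (lt_irrefl a)]; ring
    · have h1 : a ≠ b := ne_of_lt hab
      rw [if_neg (ne_of_gt hj), if_neg h1]; ring
    · have h1 : i ≠ b := fun e => absurd (e ▸ hi) (not_le.mpr hab)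
      rw [if_neg h1, if_neg (not_lt.mpr hi)]; ring
  exact RingHom.mem_ker.mp (h hf)

lemma wexp_x_b : wexp a b (xc b) = Finsupp.single (.inr b) 1 := by simp [wexp, xc]
lemma wexp_x_a (h : a ≠ b) : wexp a b (xc a) =
    Finsupp.single (.inl 0) 1 + (Finsupp.single (.inl 1) 1 + Finsupp.single (.inl 1) 1) + Finsupp.single (.inl 3) 1 := by
  simp [wexp, xc, h]
lemma wexp_x {i : Fin n} (h1 : i ≠ b) (h2 : i ≠ a) : wexp a b (xc i) =
    Finsupp.single (.inl 0) 1 + Finsupp.single (.inl 1) 1 + Finsupp.single (.inr i) 1 := by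
  simp [wexp, xc, h1, h2]
lemma wexp_y_a : wexp a b (yc a) = Finsupp.single (.inl 0) 1 + Finsupp.single (.inl 1) 1 +
    Finsupp.single (.inl 2) 1 + Finsupp.single (.inl 3) 1 := by simp [wexp, yc]
lemma wexp_y_b (h : b ≠ a) : wexp a b (yc b) =
    Finsupp.single (.inl 0) 1 + (Finsupp.single (.inl 2) 1 + Finsupp.single (.inl 2) 1) + Finsupp.single (.inl 3) 1 := by
  simp [wexp, yc, h]
lemma wexp_y {i : Fin n} (h1 : i ≠ a) (h2 : i ≠ b) : wexp a b (yc i) =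
    Finsupp.single (.inl 0) 1 + Finsupp.single (.inl 2) 1 + Finsupp.single (.inr i) 1 := by
  simp [wexp, yc, h1, h2]
lemma wexp_z : wexp a b (zc : Fin n ⊕ Fin n ⊕ Unit) = Finsupp.single (.inl 0) 1 +
    Finsupp.single (.inl 1) 1 + Finsupp.single (.inl 2) 1 + Finsupp.single (.inl 3) 1 := by
  simp [wexp, zc]

lemma monomial_exp_eq {A B : (Fin 4 ⊕ Fin n) →₀ ℕ} (h : A = B) :
    (monomial A (1 : K)) = monomial B 1 := by rw [h]

lemma psi1_vanish (hab : a < b) {f : MvPolynomial (Fin n ⊕ Fin n ⊕ Unit) K}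
    (hf : f ∈ IE K a b) : psi1 K a b f = 0 := by
  have hne : a ≠ b := ne_of_lt hab
  have hne' : b ≠ a := ne_of_gt hab
  have h : IE K a b ≤ RingHom.ker (psi1 K a b).toRingHom := by
    rw [IE, Ideal.span_le]
    rintro f (⟨i, j, hij, hi, hj, rfl⟩ | ⟨i, hi, rfl⟩ | ⟨j, hj, rfl⟩ | ⟨j, hj, rfl⟩ |
      ⟨i, hi, rfl⟩) <;>
      simp only [SetLike.mem_coe, RingHom.mem_ker, AlgHom.toRingHom_eq_coe,
        RingHom.coe_coe, xx, yy, zz, map_sub, psi1_XX, sub_eq_zero]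
    · apply monomial_exp_eq
      rcases eq_or_ne i a with hia | hia
      · have hja : j ≠ a := fun e => absurd hij (by rw [hia, e]; exact lt_irrefl a)
        rw [hia, wexp_x hj hja, wexp_y_a, wexp_x_a hne, wexp_y hja hj]; abel
      · rcases eq_or_ne j a with hja | hja
        · rw [hja, wexp_x_a hne, wexp_y hia hi, wexp_x hi hia, wexp_y_a]; abel
        · rw [wexp_x hj hja, wexp_y hia hi, wexp_x hi hia, wexp_y hja hj]; abel
    · apply monomial_exp_eq
      have hib : i ≠ b := fun e => absurd (e ▸ hi) (not_le.mpr hab)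
      rcases eq_or_ne i a with hia | hia
      · rw [hia, wexp_y_a, wexp_x_a hne, wexp_y_b hne']; abel
      · rw [wexp_y hia hib, wexp_y_a, wexp_x hib hia, wexp_y_b hne']; abel
    · apply monomial_exp_eq
      have hja : j ≠ a := ne_of_gt (lt_trans hab hj)
      rw [wexp_x (ne_of_gt hj) hja, wexp_y_b hne', wexp_y_a, wexp_y hja (ne_of_gt hj)]; abel
    · apply monomial_exp_eq
      have hja : j ≠ a := ne_of_gt (lt_trans hab hj)
      rw [wexp_z, wexp_x (ne_of_gt hj) hja, wexp_x_a hne, wexp_y hja (ne_of_gt hj)]; abel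
    · apply monomial_exp_eq
      have hib : i ≠ b := fun e => absurd (e ▸ hi) (not_le.mpr hab)
      rcases eq_or_ne i a with hia | hia
      · rw [hia, wexp_z, wexp_y_a, wexp_x_a hne, wexp_y_b hne']; abel
      · rw [wexp_z, wexp_y hia hib, wexp_x hib hia, wexp_y_b hne']; abel
  exact RingHom.mem_ker.mp (h hf)

end LkAux
end Chunk4
section Chunk5
open MvPolynomial LkAux

namespace LkAux
variable {K : Type*} [Field K] {n : ℕ} {a b : Fin n}

lemma prod_monomial {τ : Type*} (t : Finset (Fin n ⊕ Fin n ⊕ Unit))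
    (h : (Fin n ⊕ Fin n ⊕ Unit) → (τ →₀ ℕ)) :
    (∏ s ∈ t, monomial (h s) (1 : K)) = monomial (∑ s ∈ t, h s) 1 := by
  classical
  induction t using Finset.induction_on with
  | empty => simp [monomial_eq]
  | insert _ _ hs ih =>
    rw [Finset.prod_insert hs, Finset.sum_insert hs, ih, monomial_mul, one_mul]

lemma aeval_monomial_mono {τ : Type*} (f : (Fin n ⊕ Fin n ⊕ Unit) → MvPolynomial τ K)
    (w : (Fin n ⊕ Fin n ⊕ Unit) → (τ →₀ ℕ)) (hf : ∀ s, f s = monomial (w s) 1)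
    (m : (Fin n ⊕ Fin n ⊕ Unit) →₀ ℕ) (c : K) :
    aeval f (monomial m c) = monomial (m.sum fun s e => e • w s) c := by
  classical
  rw [aeval_monomial]
  have h1 : (m.prod fun s e => f s ^ e) = monomial (m.sum fun s e => e • w s) 1 := by
    rw [Finsupp.prod, Finsupp.sum, ← prod_monomial]
    apply Finset.prod_congr rfl
    intro s _
    rw [hf s, monomial_pow, one_pow]
  rw [h1, algebraMap_eq, C_mul_monomial, mul_one]

lemma psi1_monomial (m : (Fin n ⊕ Fin n ⊕ Unit) →₀ ℕ) (c : K) :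
    psi1 K a b (monomial m c) = monomial (Wm a b m) c := by
  rw [psi1, aeval_monomial_mono (w := wexp a b) _ (fun s => rfl), Wm]

lemma aeval_monomial_self (f : (Fin n ⊕ Fin n ⊕ Unit) → MvPolynomial (Fin n ⊕ Fin n ⊕ Unit) K)
    (m : (Fin n ⊕ Fin n ⊕ Unit) →₀ ℕ) (c : K) (h : ∀ s ∈ m.support, f s = X s) :
    aeval f (monomial m c) = monomial m c := by
  classical
  rw [aeval_monomial, monomial_eq]
  congr 1
  rw [Finsupp.prod, Finsupp.prod]
  apply Finset.prod_congr rfl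
  intro s hs
  rw [h s hs]

lemma aeval_monomial_zero (f : (Fin n ⊕ Fin n ⊕ Unit) → MvPolynomial (Fin n ⊕ Fin n ⊕ Unit) K)
    (m : (Fin n ⊕ Fin n ⊕ Unit) →₀ ℕ) (c : K) (s : Fin n ⊕ Fin n ⊕ Unit)
    (hs : s ∈ m.support) (h : f s = 0) : aeval f (monomial m c) = 0 := by
  classical
  rw [aeval_monomial]
  have : (m.prod fun s e => f s ^ e) = 0 := by
    rw [Finsupp.prod]
    apply Finset.prod_eq_zero hs
    rw [h]
    exact zero_pow (Finsupp.mem_support_iff.mp hs)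
  rw [this, mul_zero]

lemma Wm_add (m1 m2 : (Fin n ⊕ Fin n ⊕ Unit) →₀ ℕ) :
    Wm a b (m1 + m2) = Wm a b m1 + Wm a b m2 := by
  rw [Wm, Wm, Wm]
  exact Finsupp.sum_add_index' (fun s => zero_smul _ _) (fun s e1 e2 => add_smul _ _ _)

lemma Wm_single (s : Fin n ⊕ Fin n ⊕ Unit) (e : ℕ) :
    Wm a b (Finsupp.single s e) = e • wexp a b s := by
  exact Finsupp.sum_single_index (zero_smul _ _)

end LkAux
end Chunk5
section Chunk6
open MvPolynomial LkAux Finsupp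

namespace LkAux
variable {K : Type*} [Field K] {n : ℕ} {a b : Fin n}

local notation "σn" => (Fin n ⊕ Fin n ⊕ Unit)

lemma xc_ne_yc (p q : Fin n) : (xc p : σn) ≠ yc q := by simp [xc, yc]
lemma zc_ne_xc (p : Fin n) : (zc : σn) ≠ xc p := by simp [zc, xc]
lemma zc_ne_yc (q : Fin n) : (zc : σn) ≠ yc q := by simp [zc, yc]
lemma xc_inj {p q : Fin n} (h : (xc p : σn) = xc q) : p = q := by
  simpa [xc] using h
lemma yc_inj {p q : Fin n} (h : (yc p : σn) = yc q) : p = q := by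
  simpa [yc] using h

lemma μm_add (m1 m2 : σn →₀ ℕ) : μm (m1 + m2) = μm m1 + μm m2 := by
  simp only [μm, Finsupp.add_apply, add_mul, Finset.sum_add_distrib]
  ring

lemma μm_single_x (i : Fin n) : μm (Finsupp.single (xc i : σn) 1) = i.val + 2 := by
  simp only [μm, Finsupp.single_apply, if_neg (zc_ne_xc i).symm]
  rw [Finset.sum_eq_single i]
  · simp
  · intro j _ hj
    rw [if_neg (fun h => hj (xc_inj h).symm), zero_mul]
  · simp
lemma μm_single_y (q : Fin n) : μm (Finsupp.single (yc q : σn) 1) = 0 := by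
  simp only [μm, Finsupp.single_apply, if_neg (zc_ne_yc q).symm]
  rw [Finset.sum_eq_zero]
  · simp
  · intro j _
    rw [if_neg (Ne.symm (xc_ne_yc j q)), zero_mul]
lemma μm_single_z : μm (Finsupp.single (zc : σn) 1) = 1 := by
  simp only [μm, Finsupp.single_apply, if_pos rfl]
  rw [Finset.sum_eq_zero]
  · simp
  · intro j _
    rw [if_neg (zc_ne_xc j), zero_mul]

lemma le_two {m : σn →₀ ℕ} {s1 s2 : σn} (h12 : s1 ≠ s2) (h1 : 0 < m s1) (h2 : 0 < m s2) :
    Finsupp.single s1 1 + Finsupp.single s2 1 ≤ m := by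
  rw [Finsupp.le_def]
  intro s
  rw [Finsupp.add_apply, Finsupp.single_apply, Finsupp.single_apply]
  by_cases e1 : s1 = s
  · rw [if_pos e1, if_neg (fun h => h12 (e1.trans h.symm)), ← e1]; omega
  · by_cases e2 : s2 = s
    · rw [if_neg e1, if_pos e2, ← e2]; omega
    · rw [if_neg e1, if_neg e2]; omega

lemma le_three {m : σn →₀ ℕ} {s1 s2 s3 : σn} (h12 : s1 ≠ s2) (h13 : s1 ≠ s3) (h23 : s2 ≠ s3)
    (h1 : 0 < m s1) (h2 : 0 < m s2) (h3 : 0 < m s3) :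
    Finsupp.single s1 1 + Finsupp.single s2 1 + Finsupp.single s3 1 ≤ m := by
  rw [Finsupp.le_def]
  intro s
  rw [Finsupp.add_apply, Finsupp.add_apply, Finsupp.single_apply, Finsupp.single_apply,
    Finsupp.single_apply]
  by_cases e1 : s1 = s
  · rw [if_pos e1, if_neg (fun h => h12 (e1.trans h.symm)), if_neg (fun h => h13 (e1.trans h.symm)), ← e1]
    omega
  · by_cases e2 : s2 = s
    · rw [if_neg e1, if_pos e2, if_neg (fun h => h23 (e2.trans h.symm)), ← e2]; omega
    · by_cases e3 : s3 = s
      · rw [if_neg e1, if_neg e2, if_pos e3, ← e3]; omega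
      · rw [if_neg e1, if_neg e2, if_neg e3]; omega

lemma XmulX (s t : σn) : (X s : MvPolynomial σn K) * X t =
    monomial (Finsupp.single s 1 + Finsupp.single t 1) 1 := by
  rw [X, X, monomial_mul, one_mul]

lemma XmulXmulX (s t u : σn) : (X s : MvPolynomial σn K) * (X t * X u) =
    monomial (Finsupp.single s 1 + Finsupp.single t 1 + Finsupp.single u 1) 1 := by
  rw [X, X, X, monomial_mul, monomial_mul, one_mul, one_mul, add_assoc]

lemma step_cert {m L R : σn →₀ ℕ} (hL : L ≤ m) (c : K)
    (hE : (monomial L (1 : K)) - monomial R 1 ∈ IE K a b) :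
    monomial m c - monomial (m - L + R) c ∈ IE K a b := by
  have hmu : m - L + L = m := tsub_add_cancel_of_le hL
  have heq : monomial m c - monomial (m - L + R) c =
      monomial (m - L) c * ((monomial L (1 : K)) - monomial R 1) := by
    rw [mul_sub, monomial_mul, monomial_mul, mul_one, hmu]
  rw [heq]
  exact Ideal.mul_mem_left _ _ hE

lemma step_measure {m L R : σn →₀ ℕ} (hL : L ≤ m) (h : μm R < μm L) :
    μm (m - L + R) < μm m := by
  have h1 : μm (m - L) + μm L = μm m := by rw [← μm_add, tsub_add_cancel_of_le hL]
  rw [μm_add]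
  omega

lemma stdOK_monomial (m : σn →₀ ℕ) (c : K) (h : StdP a b m) :
    stdOK a b (monomial m c) := by
  intro m' hm'
  rw [MvPolynomial.mem_support_iff, coeff_monomial] at hm'
  by_cases e : m = m'
  · exact e ▸ h
  · rw [if_neg e] at hm'; exact absurd rfl hm'

lemma stdOK_add {f g : MvPolynomial σn K} (hf : stdOK a b f) (hg : stdOK a b g) :
    stdOK a b (f + g) := by
  intro m hm
  rcases Finset.mem_union.mp (MvPolynomial.support_add hm) with h | h
  · exact hf m h
  · exact hg m h

end LkAux
end Chunk6
section Chunk7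
open MvPolynomial LkAux Finsupp

namespace LkAux
variable {K : Type*} [Field K] {n : ℕ} {a b : Fin n}

local notation "σn" => (Fin n ⊕ Fin n ⊕ Unit)

lemma not_std_cases (m : σn →₀ ℕ) (h : ¬ StdP a b m) :
    (∃ p q : Fin n, p ≠ b ∧ q ≠ b ∧ 0 < m (xc p) ∧ 0 < m (yc q) ∧ q < p) ∨
    ((0 < m (yc b)) ∧ ∃ p, p ≠ b ∧ 0 < m (xc p)) ∨
    (0 < m zc ∧ ∃ q, q ≤ a ∧ 0 < m (yc q)) ∨
    (0 < m zc ∧ ∃ p, b < p ∧ 0 < m (xc p)) ∨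
    (0 < m zc ∧ (∃ p, p ≤ a ∧ 0 < m (xc p)) ∧ ∃ q, b < q ∧ 0 < m (yc q)) := by
  by_contra hc
  push_neg at hc
  obtain ⟨h1, h2, h3, h4, h5⟩ := hc
  apply h
  refine ⟨?_, ?_, ?_, ?_, ?_⟩
  · exact h1
  · intro hyb p hp
    exact Nat.le_zero.mp (h2 hyb p hp)
  · intro hz q hq
    exact Nat.le_zero.mp (h3 hz q hq)
  · intro hz p hp
    exact Nat.le_zero.mp (h4 hz p hp)
  · intro hz
    by_cases hp : ∃ p, p ≤ a ∧ 0 < m (xc p)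
    · right
      intro q hq
      exact Nat.le_zero.mp (h5 hz hp q hq)
    · left
      intro p hpa
      by_contra hxp
      exact hp ⟨p, hpa, Nat.pos_of_ne_zero hxp⟩

lemma monomial_reduce (hab : (a : ℕ) + 1 = (b : ℕ)) (N : ℕ) :
    ∀ m : σn →₀ ℕ, μm m ≤ N → ∀ c : K,
      ∃ v, stdOK a b v ∧ monomial m c - v ∈ IE K a b := by
  induction N using Nat.strong_induction_on with
  | _ N IH =>
  intro m hm c
  by_cases hstd : StdP a b m
  · exact ⟨monomial m c, stdOK_monomial m c hstd, by simp⟩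
  have hab' : a < b := by rw [Fin.lt_def]; omega
  have key : ∀ L R : σn →₀ ℕ, L ≤ m → μm R < μm L →
      (monomial L (1 : K)) - monomial R 1 ∈ IE K a b →
      ∃ v, stdOK a b v ∧ monomial m c - v ∈ IE K a b := by
    intro L R hL hμ hE
    have hlt : μm (m - L + R) < μm m := step_measure hL hμ
    obtain ⟨v, hv1, hv2⟩ := IH (μm (m - L + R)) (lt_of_lt_of_le hlt hm) _ le_rfl c
    refine ⟨v, hv1, ?_⟩
    have h0 := step_cert (a := a) (b := b) hL c hE
    have h12 := add_mem h0 hv2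
    convert h12 using 1
    ring
  rcases not_std_cases m hstd with ⟨p, q, hp, hq, hxp, hyq, hlt⟩ | ⟨hyb, p, hp, hxp⟩ |
    ⟨hz, q, hq, hyq⟩ | ⟨hz, p, hp, hxp⟩ | ⟨hz, ⟨p, hp, hxp⟩, ⟨q, hq, hyq⟩⟩
  · -- C1 : sort xy
    apply key (Finsupp.single (xc p) 1 + Finsupp.single (yc q) 1)
        (Finsupp.single (xc q) 1 + Finsupp.single (yc p) 1)
        (le_two (xc_ne_yc p q) hxp hyq)
    · simp only [μm_add, μm_single_x, μm_single_y]
      have := hlt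
      rw [Fin.lt_def] at this
      omega
    · have h1 := mem_IE_E1 (K := K) (a := a) (b := b) hlt hq hp
      simp only [xx, yy] at h1
      rwa [XmulX, XmulX] at h1
  · -- C2 : x * y_b
    apply key (Finsupp.single (xc p) 1 + Finsupp.single (yc b) 1)
        (Finsupp.single (yc a) 1 + Finsupp.single (yc p) 1)
        (le_two (xc_ne_yc p b) hxp hyb)
    · simp only [μm_add, μm_single_x, μm_single_y]
      omega
    · have hm1 : xx K p * yy K b - yy K a * yy K p ∈ IE K a b := by
        rcases lt_or_ge a p with hpa | hpa
        · have hbp : b < p := by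
            rw [Fin.lt_def] at hpa ⊢
            rcases Nat.lt_or_ge (p : ℕ) (b : ℕ) with h' | h'
            · omega
            · rcases Nat.eq_or_lt_of_le h' with h'' | h''
              · exact absurd (Fin.ext h''.symm) hp
              · omega
          exact mem_IE_E3 hbp
        · have h2 := mem_IE_E2 (K := K) (a := a) (b := b) hpa
          have := neg_mem h2
          rw [neg_sub] at this
          exact this
      simp only [xx, yy] at hm1
      rwa [XmulX, XmulX] at hm1
  · -- C3 : z * y_small
    apply key (Finsupp.single (zc : σn) 1 + Finsupp.single (yc q) 1)
        (Finsupp.single (yc a) 1 + Finsupp.single (yc q) 1)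
        (le_two (zc_ne_yc q) hz hyq)
    · simp only [μm_add, μm_single_z, μm_single_y]
      omega
    · have h1 := mem_IE_zy (K := K) (a := a) (b := b) hq
      simp only [zz, yy] at h1
      rwa [XmulX, XmulX] at h1
  · -- C4 : z * x_big
    apply key (Finsupp.single (zc : σn) 1 + Finsupp.single (xc p) 1)
        (Finsupp.single (xc a) 1 + Finsupp.single (yc p) 1)
        (le_two (zc_ne_xc p) hz hxp)
    · simp only [μm_add, μm_single_z, μm_single_x, μm_single_y]
      have := hp
      rw [Fin.lt_def] at this
      omega
    · have h1 := mem_IE_E4 (K := K) (a := a) (b := b) hp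
      simp only [zz, xx, yy] at h1
      rwa [XmulX, XmulX] at h1
  · -- C5 : z * mixed
    apply key (Finsupp.single (zc : σn) 1 + Finsupp.single (xc p) 1 + Finsupp.single (yc q) 1)
        (Finsupp.single (yc a) 1 + Finsupp.single (xc p) 1 + Finsupp.single (yc q) 1)
        (le_three (zc_ne_xc p) (zc_ne_yc q) (xc_ne_yc p q) hz hxp hyq)
    · simp only [μm_add, μm_single_z, μm_single_x, μm_single_y]
      omega
    · have h1 := mem_IE_zxy (K := K) hp hq hab'
      simp only [zz, xx, yy] at h1
      rwa [XmulXmulX, XmulXmulX] at h1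

lemma poly_reduce (hab : (a : ℕ) + 1 = (b : ℕ)) (f : MvPolynomial σn K) :
    ∃ v, stdOK a b v ∧ f - v ∈ IE K a b := by
  induction f using MvPolynomial.induction_on' with
  | monomial m c => exact monomial_reduce hab (μm m) m le_rfl c
  | add p q hp hq =>
    obtain ⟨v1, a1, b1⟩ := hp
    obtain ⟨v2, a2, b2⟩ := hq
    refine ⟨v1 + v2, stdOK_add a1 a2, ?_⟩
    have h12 := add_mem b1 b2
    convert h12 using 1
    ring

end LkAux
end Chunk7
section Chunk8
open MvPolynomial LkAux Finsupp

namespace LkAux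
variable {K : Type*} [Field K] {n : ℕ} {a b : Fin n}

local notation "σn" => (Fin n ⊕ Fin n ⊕ Unit)

/-- total x-degree outside index `b` -/
def SA (b : Fin n) (m : σn →₀ ℕ) : ℕ := ∑ i : Fin n, if i = b then 0 else m (xc i)
/-- total y-degree -/
def SY (m : σn →₀ ℕ) : ℕ := ∑ i : Fin n, m (yc i)

lemma Wm_apply (m : σn →₀ ℕ) (t : Fin 4 ⊕ Fin n) :
    (Wm a b m) t = (∑ i : Fin n, m (xc i) * (wexp a b (xc i) t)) +
      ((∑ i : Fin n, m (yc i) * (wexp a b (yc i) t)) + m zc * (wexp a b zc t)) := by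
  rw [Wm, Finsupp.sum_apply]
  have h1 : (m.sum fun s e => (e • wexp a b s) t) = m.sum fun s e => e * wexp a b s t := by
    apply Finsupp.sum_congr
    intro s _
    rw [Finsupp.smul_apply, smul_eq_mul]
  rw [h1, Finsupp.sum_fintype]
  · rw [Fintype.sum_sum_type, Fintype.sum_sum_type]
    simp [xc, yc, zc]
  · exact fun s => zero_mul _
end LkAux
end Chunk8
section Chunk9
open MvPolynomial LkAux Finsupp

namespace LkAux
variable {K : Type*} [Field K] {n : ℕ} {a b : Fin n}

local notation "σn" => (Fin n ⊕ Fin n ⊕ Unit)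

lemma Wm_coord_s (hab : a ≠ b) (m : σn →₀ ℕ) :
    (Wm a b m) (.inl 0) = SA b m + (SY m + m zc) := by
  rw [Wm_apply, SA, SY]
  congr 1
  · apply Finset.sum_congr rfl
    intro i _
    by_cases hib : i = b
    · subst hib
      rw [wexp_x_b, if_pos rfl]
      simp [Finsupp.single_apply]
    · rw [if_neg hib]
      by_cases hia : i = a
      · subst hia
        rw [wexp_x_a hab]
        simp [Finsupp.add_apply, Finsupp.single_apply]
      · rw [wexp_x hib hia]
        simp [Finsupp.add_apply, Finsupp.single_apply]
  · congr 1
    · apply Finset.sum_congr rfl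
      intro i _
      by_cases hia : i = a
      · subst hia
        rw [wexp_y_a]
        simp [Finsupp.add_apply, Finsupp.single_apply]
      · by_cases hib : i = b
        · subst hib
          rw [wexp_y_b (Ne.symm hab)]
          simp [Finsupp.add_apply, Finsupp.single_apply]
        · rw [wexp_y hia hib]
          simp [Finsupp.add_apply, Finsupp.single_apply]
    · rw [wexp_z]
      simp [Finsupp.add_apply, Finsupp.single_apply]
end LkAux
end Chunk9
section Chunk10
open MvPolynomial LkAux Finsupp

namespace LkAux
variable {K : Type*} [Field K] {n : ℕ} {a b : Fin n}

local notation "σn" => (Fin n ⊕ Fin n ⊕ Unit)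

lemma Wm_coord_p (hab : a ≠ b) (m : σn →₀ ℕ) :
    (Wm a b m) (.inl 1) = (SA b m + m (xc a)) + (m (yc a) + m zc) := by
  rw [Wm_apply, SA]
  have hx : ∀ i : Fin n, m (xc i) * wexp a b (xc i) (.inl 1) =
      (if i = b then 0 else m (xc i)) + (if i = a then m (xc i) else 0) := by
    intro i
    by_cases hib : i = b
    · subst hib
      rw [wexp_x_b, if_pos rfl, if_neg (Ne.symm hab)]
      simp [Finsupp.single_apply]
    · rw [if_neg hib]
      by_cases hia : i = a
      · subst hia
        rw [wexp_x_a hab, if_pos rfl]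
        simp [Finsupp.add_apply, Finsupp.single_apply]
        ring
      · rw [wexp_x hib hia, if_neg hia]
        simp [Finsupp.add_apply, Finsupp.single_apply]
  have hy : ∀ i : Fin n, m (yc i) * wexp a b (yc i) (.inl 1) =
      (if i = a then m (yc i) else 0) := by
    intro i
    by_cases hia : i = a
    · subst hia
      rw [wexp_y_a, if_pos rfl]
      simp [Finsupp.add_apply, Finsupp.single_apply]
    · rw [if_neg hia]
      by_cases hib : i = b
      · subst hib
        rw [wexp_y_b (Ne.symm hab)]
        simp [Finsupp.add_apply, Finsupp.single_apply]
      · rw [wexp_y hia hib]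
        simp [Finsupp.add_apply, Finsupp.single_apply]
  rw [Finset.sum_congr rfl (fun i _ => hx i), Finset.sum_congr rfl (fun i _ => hy i),
    Finset.sum_add_distrib]
  simp only [Finset.sum_ite_eq', Finset.mem_univ, if_pos]
  rw [wexp_z]
  simp [Finsupp.add_apply, Finsupp.single_apply]

lemma Wm_coord_q (hab : a ≠ b) (m : σn →₀ ℕ) :
    (Wm a b m) (.inl 2) = (SY m + m (yc b)) + m zc := by
  rw [Wm_apply, SY]
  have hx : ∀ i : Fin n, m (xc i) * wexp a b (xc i) (.inl 2) = 0 := by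
    intro i
    by_cases hib : i = b
    · subst hib; rw [wexp_x_b]; simp [Finsupp.single_apply]
    · by_cases hia : i = a
      · subst hia; rw [wexp_x_a hab]; simp [Finsupp.add_apply, Finsupp.single_apply]
      · rw [wexp_x hib hia]; simp [Finsupp.add_apply, Finsupp.single_apply]
  have hy : ∀ i : Fin n, m (yc i) * wexp a b (yc i) (.inl 2) =
      m (yc i) + (if i = b then m (yc i) else 0) := by
    intro i
    by_cases hia : i = a
    · subst hia
      rw [wexp_y_a, if_neg hab]
      simp [Finsupp.add_apply, Finsupp.single_apply]
    · by_cases hib : i = b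
      · subst hib
        rw [wexp_y_b (Ne.symm hab), if_pos rfl]
        simp [Finsupp.add_apply, Finsupp.single_apply]
        ring
      · rw [wexp_y hia hib, if_neg hib]
        simp [Finsupp.add_apply, Finsupp.single_apply]
  rw [Finset.sum_congr rfl (fun i _ => hx i), Finset.sum_congr rfl (fun i _ => hy i),
    Finset.sum_add_distrib]
  simp only [Finset.sum_ite_eq', Finset.mem_univ, if_pos, Finset.sum_const_zero]
  rw [wexp_z]
  simp [Finsupp.add_apply, Finsupp.single_apply]

lemma Wm_coord_r (hab : a ≠ b) (m : σn →₀ ℕ) :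
    (Wm a b m) (.inl 3) = (m (xc a) + m (yc a)) + (m (yc b) + m zc) := by
  rw [Wm_apply]
  have hx : ∀ i : Fin n, m (xc i) * wexp a b (xc i) (.inl 3) =
      (if i = a then m (xc i) else 0) := by
    intro i
    by_cases hib : i = b
    · subst hib
      rw [wexp_x_b, if_neg (Ne.symm hab)]
      simp [Finsupp.single_apply]
    · by_cases hia : i = a
      · subst hia
        rw [wexp_x_a hab, if_pos rfl]
        simp [Finsupp.add_apply, Finsupp.single_apply]
      · rw [wexp_x hib hia, if_neg hia]
        simp [Finsupp.add_apply, Finsupp.single_apply]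
  have hy : ∀ i : Fin n, m (yc i) * wexp a b (yc i) (.inl 3) =
      (if i = a then m (yc i) else 0) + (if i = b then m (yc i) else 0) := by
    intro i
    by_cases hia : i = a
    · subst hia
      rw [wexp_y_a, if_pos rfl, if_neg hab]
      simp [Finsupp.add_apply, Finsupp.single_apply]
    · by_cases hib : i = b
      · subst hib
        rw [wexp_y_b (Ne.symm hab), if_neg hia, if_pos rfl]
        simp [Finsupp.add_apply, Finsupp.single_apply]
      · rw [wexp_y hia hib, if_neg hia, if_neg hib]
        simp [Finsupp.add_apply, Finsupp.single_apply]
  rw [Finset.sum_congr rfl (fun i _ => hx i), Finset.sum_congr rfl (fun i _ => hy i),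
    Finset.sum_add_distrib]
  simp only [Finset.sum_ite_eq', Finset.mem_univ, if_pos]
  rw [wexp_z]
  simp [Finsupp.add_apply, Finsupp.single_apply]
  omega

lemma Wm_coord_v (m : σn →₀ ℕ) {j : Fin n} (hja : j ≠ a) (hjb : j ≠ b) :
    (Wm a b m) (.inr j) = m (xc j) + m (yc j) := by
  rw [Wm_apply]
  have hx : ∀ i : Fin n, m (xc i) * wexp a b (xc i) (.inr j) =
      (if i = j then m (xc i) else 0) := by
    intro i
    by_cases hib : i = b
    · subst hib
      rw [wexp_x_b, if_neg (Ne.symm hjb)]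
      simp [Finsupp.single_apply, Ne.symm hjb]
    · by_cases hia : i = a
      · subst hia
        rw [wexp_x_a hib, if_neg (Ne.symm hja)]
        simp [Finsupp.add_apply, Finsupp.single_apply]
      · rw [wexp_x hib hia]
        by_cases hij : i = j
        · subst hij
          rw [if_pos rfl]
          simp [Finsupp.add_apply, Finsupp.single_apply]
        · rw [if_neg hij]
          simp [Finsupp.add_apply, Finsupp.single_apply, hij]
  have hy : ∀ i : Fin n, m (yc i) * wexp a b (yc i) (.inr j) =
      (if i = j then m (yc i) else 0) := by
    intro i
    by_cases hia : i = a
    · subst hia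
      rw [wexp_y_a, if_neg (Ne.symm hja)]
      simp [Finsupp.add_apply, Finsupp.single_apply]
    · by_cases hib : i = b
      · subst hib
        rw [wexp_y_b hia, if_neg (Ne.symm hjb)]
        simp [Finsupp.add_apply, Finsupp.single_apply]
      · rw [wexp_y hia hib]
        by_cases hij : i = j
        · subst hij
          rw [if_pos rfl]
          simp [Finsupp.add_apply, Finsupp.single_apply]
        · rw [if_neg hij]
          simp [Finsupp.add_apply, Finsupp.single_apply, hij]
  rw [Finset.sum_congr rfl (fun i _ => hx i), Finset.sum_congr rfl (fun i _ => hy i)]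
  simp only [Finset.sum_ite_eq', Finset.mem_univ, if_pos]
  rw [wexp_z]
  simp [Finsupp.add_apply, Finsupp.single_apply]

lemma Wm_coord_vb (hab : a ≠ b) (m : σn →₀ ℕ) :
    (Wm a b m) (.inr b) = m (xc b) := by
  rw [Wm_apply]
  have hx : ∀ i : Fin n, m (xc i) * wexp a b (xc i) (.inr b) =
      (if i = b then m (xc i) else 0) := by
    intro i
    by_cases hib : i = b
    · subst hib
      rw [wexp_x_b, if_pos rfl]
      simp [Finsupp.single_apply]
    · by_cases hia : i = a
      · subst hia
        rw [wexp_x_a hib, if_neg hib]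
        simp [Finsupp.add_apply, Finsupp.single_apply]
      · rw [wexp_x hib hia, if_neg hib]
        simp [Finsupp.add_apply, Finsupp.single_apply, hib]
  have hy : ∀ i : Fin n, m (yc i) * wexp a b (yc i) (.inr b) = 0 := by
    intro i
    by_cases hia : i = a
    · subst hia
      rw [wexp_y_a]
      simp [Finsupp.add_apply, Finsupp.single_apply]
    · by_cases hib : i = b
      · subst hib
        rw [wexp_y_b hia]
        simp [Finsupp.add_apply, Finsupp.single_apply]
      · rw [wexp_y hia hib]
        simp [Finsupp.add_apply, Finsupp.single_apply, hib]
  rw [Finset.sum_congr rfl (fun i _ => hx i), Finset.sum_congr rfl (fun i _ => hy i)]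
  simp only [Finset.sum_ite_eq', Finset.mem_univ, if_pos, Finset.sum_const_zero]
  rw [wexp_z]
  simp [Finsupp.add_apply, Finsupp.single_apply]

end LkAux
end Chunk10
section Chunk11
open MvPolynomial LkAux Finsupp

namespace LkAux
variable {K : Type*} [Field K] {n : ℕ} {a b : Fin n}

local notation "σn" => (Fin n ⊕ Fin n ⊕ Unit)

lemma SA_eq_zero (h : SA b m = 0) : ∀ i : Fin n, i ≠ b → m (xc i) = 0 := by
  intro i hi
  have := Finset.sum_eq_zero_iff.mp h i (Finset.mem_univ i)
  rwa [if_neg hi] at this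

lemma SA_zero_of (h : ∀ i : Fin n, i ≠ b → m (xc i) = 0) : SA b m = 0 := by
  apply Finset.sum_eq_zero
  intro i _
  by_cases hib : i = b
  · rw [if_pos hib]
  · rw [if_neg hib, h i hib]

lemma exchange {f g : Fin n → ℕ} (h : ∑ i, f i = ∑ i, g i) {i0 : Fin n}
    (hi : g i0 < f i0) : ∃ j, f j < g j := by
  by_contra hc
  push_neg at hc
  have := Finset.sum_lt_sum (f := g) (g := f) (fun i _ => hc i) ⟨i0, Finset.mem_univ i0, hi⟩
  omega

lemma yb_zero_of_SA_pos (sm : StdP a b m) (h : SA b m ≠ 0) : m (yc b) = 0 := by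
  by_contra hyb
  apply h
  exact SA_zero_of (fun i hi => sm.2.1 (Nat.pos_of_ne_zero hyb) i hi)

lemma no_cross {m m' : σn →₀ ℕ} (sm : StdP a b m) (sm' : StdP a b m')
    (key : ∀ j, j ≠ b → m (xc j) + m (yc j) = m' (xc j) + m' (yc j))
    (hsum : SA b m = SA b m') :
    ∀ j, ¬ ((if j = b then 0 else m' (xc j)) < (if j = b then 0 else m (xc j))) := by
  intro j hgt
  have hjb : j ≠ b := by
    intro e; rw [if_pos e, if_pos e] at hgt; omega
  rw [if_neg hjb, if_neg hjb] at hgt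
  obtain ⟨j', hj'⟩ := exchange (f := fun i => if i = b then 0 else m (xc i))
    (g := fun i => if i = b then 0 else m' (xc i)) hsum
    (i0 := j) (by simpa [if_neg hjb] using hgt)
  have hj'b : j' ≠ b := by
    intro e; rw [if_pos e, if_pos e] at hj'; omega
  rw [if_neg hj'b, if_neg hj'b] at hj'
  have hy' : 0 < m' (yc j) := by have := key j hjb; omega
  have hy : 0 < m (yc j') := by have := key j' hj'b; omega
  have h1 : j ≤ j' := sm.1 j j' hjb hj'b (by omega) hy
  have h2 : j' ≤ j := sm'.1 j' j hj'b hjb (by omega) hy'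
  have : j = j' := le_antisymm h1 h2
  rw [this] at hgt
  omega

lemma Wm_inj (hab : (a : ℕ) + 1 = (b : ℕ)) {m m' : σn →₀ ℕ}
    (sm : StdP a b m) (sm' : StdP a b m') (hz : m zc = 0) (hz' : m' zc = 0)
    (h : Wm a b m = Wm a b m') : m = m' := by
  have hne : a ≠ b := fun e => by rw [e] at hab; omega
  have happ : ∀ t, (Wm a b m) t = (Wm a b m') t := fun t => by rw [h]
  have es := happ (.inl 0); rw [Wm_coord_s hne, Wm_coord_s hne] at es
  have ep := happ (.inl 1); rw [Wm_coord_p hne, Wm_coord_p hne] at ep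
  have eq2 := happ (.inl 2); rw [Wm_coord_q hne, Wm_coord_q hne] at eq2
  have er := happ (.inl 3); rw [Wm_coord_r hne, Wm_coord_r hne] at er
  have evb := happ (.inr b); rw [Wm_coord_vb hne, Wm_coord_vb hne] at evb
  have ev : ∀ j, j ≠ a → j ≠ b → m (xc j) + m (yc j) = m' (xc j) + m' (yc j) := by
    intro j hja hjb
    have := happ (.inr j); rwa [Wm_coord_v m hja hjb, Wm_coord_v m' hja hjb] at this
  rw [hz, hz'] at es ep eq2 er
  by_cases hSA : SA b m = 0
  · by_cases hSA' : SA b m' = 0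
    · -- both have no x outside b
      have hx0 := SA_eq_zero hSA
      have hx0' := SA_eq_zero hSA'
      have hxa : m (xc a) = 0 := hx0 a hne
      have hxa' : m' (xc a) = 0 := hx0' a hne
      apply Finsupp.ext
      intro s
      rcases s with i | s
      · by_cases hib : i = b
        · rw [show (Sum.inl i : σn) = xc b from by rw [hib]; rfl]; exact evb
        · rw [show (Sum.inl i : σn) = xc i from rfl, hx0 i hib, hx0' i hib]
      rcases s with i | u
      · by_cases hia : i = a
        · subst hia
          rw [show (Sum.inr (Sum.inl i) : σn) = yc i from rfl]
          omega
        · by_cases hib : i = b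
          · subst hib
            rw [show (Sum.inr (Sum.inl i) : σn) = yc i from rfl]
            omega
          · have := ev i hia hib
            rw [show (Sum.inr (Sum.inl i) : σn) = yc i from rfl]
            rw [hx0 i hib, hx0' i hib] at this
            omega
      · cases u
        rw [show (Sum.inr (Sum.inr ()) : σn) = zc from rfl, hz, hz']
    · -- SA m = 0, SA m' ≠ 0 : contradiction
      exfalso
      have hyb' : m' (yc b) = 0 := yb_zero_of_SA_pos sm' hSA'
      have hxa : m (xc a) = 0 := SA_eq_zero hSA a hne
      omega
  · by_cases hSA' : SA b m' = 0
    · exfalso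
      have hyb : m (yc b) = 0 := yb_zero_of_SA_pos sm hSA
      have hxa' : m' (xc a) = 0 := SA_eq_zero hSA' a hne
      omega
    · -- main case
      have hyb : m (yc b) = 0 := yb_zero_of_SA_pos sm hSA
      have hyb' : m' (yc b) = 0 := yb_zero_of_SA_pos sm' hSA'
      rw [hyb] at eq2 er
      rw [hyb'] at eq2 er
      have hSY : SY m = SY m' := by omega
      have hsum : SA b m = SA b m' := by omega
      have key : ∀ j, j ≠ b → m (xc j) + m (yc j) = m' (xc j) + m' (yc j) := by
        intro j hjb
        by_cases hja : j = a
        · subst hja; omega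
        · exact ev j hja hjb
      have key' : ∀ j, j ≠ b → m' (xc j) + m' (yc j) = m (xc j) + m (yc j) :=
        fun j hj => (key j hj).symm
      have h1 := no_cross sm sm' key hsum
      have h2 := no_cross sm' sm key' hsum.symm
      have hxeq : ∀ j, j ≠ b → m (xc j) = m' (xc j) := by
        intro j hjb
        have a1 := h1 j
        have a2 := h2 j
        rw [if_neg hjb, if_neg hjb] at a1 a2
        omega
      apply Finsupp.ext
      intro s
      rcases s with i | s
      · by_cases hib : i = b
        · rw [show (Sum.inl i : σn) = xc b from by rw [hib]; rfl]; exact evb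
        · exact hxeq i hib
      rcases s with i | u
      · show m (yc i) = m' (yc i)
        by_cases hib : i = b
        · rw [hib, hyb, hyb']
        · have := key i hib
          have := hxeq i hib
          omega
      · cases u
        exact hz.trans hz'.symm
  end LkAux
end Chunk11
section Chunk12
open MvPolynomial LkAux Finsupp

namespace LkAux
variable {K : Type*} [Field K] {n : ℕ} {a b : Fin n}

local notation "σn" => (Fin n ⊕ Fin n ⊕ Unit)

def Surv2 (a b : Fin n) (m : σn →₀ ℕ) : Prop :=
  (∀ i, m (yc i) = 0) ∧ (∀ i : Fin n, ¬(i ≤ a ∨ i = b) → m (xc i) = 0)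

def Surv3 (a b : Fin n) (m : σn →₀ ℕ) : Prop :=
  (∀ i : Fin n, i ≠ b → m (xc i) = 0) ∧ (∀ i : Fin n, ¬ a < i → m (yc i) = 0)

lemma psi2_monomial_surv {m : σn →₀ ℕ} (h : Surv2 a b m) (c : K) :
    psi2 K a b (monomial m c) = monomial m c := by
  apply aeval_monomial_self
  intro s hs
  rcases s with i | s
  · have hne : m (xc i) ≠ 0 := Finsupp.mem_support_iff.mp hs
    have hcond : i ≤ a ∨ i = b := by
      by_contra hc
      exact hne (h.2 i hc)
    show (if i ≤ a ∨ i = b then xx K i else 0) = X (Sum.inl i)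
    rw [if_pos hcond]; rfl
  rcases s with i | u
  · exact absurd (h.1 i) (Finsupp.mem_support_iff.mp hs)
  · cases u; rfl

lemma psi2_monomial_kill {m : σn →₀ ℕ} (h : ¬ Surv2 a b m) (c : K) :
    psi2 K a b (monomial m c) = 0 := by
  by_cases h1 : ∀ i, m (yc i) = 0
  · have h2 : ¬ ∀ i : Fin n, ¬(i ≤ a ∨ i = b) → m (xc i) = 0 := fun hh => h ⟨h1, hh⟩
    push_neg at h2
    obtain ⟨i, hcond, hne⟩ := h2
    apply aeval_monomial_zero _ _ _ (xc i) (Finsupp.mem_support_iff.mpr hne)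
    show (if i ≤ a ∨ i = b then xx K i else 0) = 0
    rw [if_neg (by push_neg; exact hcond : ¬(i ≤ a ∨ i = b))]
  · push_neg at h1
    obtain ⟨i, hne⟩ := h1
    exact aeval_monomial_zero _ _ _ (yc i) (Finsupp.mem_support_iff.mpr hne) rfl

lemma psi3_monomial_surv {m : σn →₀ ℕ} (h : Surv3 a b m) (c : K) :
    psi3 K a b (monomial m c) = monomial m c := by
  apply aeval_monomial_self
  intro s hs
  rcases s with i | s
  · have hne : m (xc i) ≠ 0 := Finsupp.mem_support_iff.mp hs
    have hcond : i = b := by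
      by_contra hc
      exact hne (h.1 i hc)
    show (if i = b then xx K i else 0) = X (Sum.inl i)
    rw [if_pos hcond]; rfl
  rcases s with i | u
  · have hne : m (yc i) ≠ 0 := Finsupp.mem_support_iff.mp hs
    have hcond : a < i := by
      by_contra hc
      exact hne (h.2 i hc)
    show (if a < i then yy K i else 0) = X (Sum.inr (Sum.inl i))
    rw [if_pos hcond]; rfl
  · cases u; rfl

lemma psi3_monomial_kill {m : σn →₀ ℕ} (h : ¬ Surv3 a b m) (c : K) :
    psi3 K a b (monomial m c) = 0 := by
  by_cases h1 : ∀ i : Fin n, i ≠ b → m (xc i) = 0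
  · have h2 : ¬ ∀ i : Fin n, ¬ a < i → m (yc i) = 0 := fun hh => h ⟨h1, hh⟩
    push_neg at h2
    obtain ⟨i, hcond, hne⟩ := h2
    apply aeval_monomial_zero _ _ _ (yc i) (Finsupp.mem_support_iff.mpr hne)
    show (if a < i then yy K i else 0) = 0
    rw [if_neg (not_lt.mpr hcond)]
  · push_neg at h1
    obtain ⟨i, hib, hne⟩ := h1
    apply aeval_monomial_zero _ _ _ (xc i) (Finsupp.mem_support_iff.mpr hne)
    show (if i = b then xx K i else 0) = 0
    rw [if_neg hib]

lemma fin_tri (hab : (a : ℕ) + 1 = (b : ℕ)) (i : Fin n) : i ≤ a ∨ i = b ∨ b < i := by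
  rcases Nat.lt_trichotomy (i : ℕ) (b : ℕ) with h | h | h
  · left; rw [Fin.le_def]; omega
  · right; left; exact Fin.ext h
  · right; right; rw [Fin.lt_def]; omega

lemma std_z_surv (hab : (a : ℕ) + 1 = (b : ℕ)) {m : σn →₀ ℕ} (h : StdP a b m)
    (hz : 0 < m zc) : Surv2 a b m ∨ Surv3 a b m := by
  obtain ⟨P1, P2, P3, P4, P5⟩ := h
  rcases P5 hz with hxs | hys
  · right
    refine ⟨?_, ?_⟩
    · intro i hib
      rcases fin_tri hab i with h' | h' | h'
      · exact hxs i h'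
      · exact absurd h' hib
      · exact P4 hz i h'
    · intro i hi
      exact P3 hz i (not_lt.mp hi)
  · by_cases hyb : m (yc b) = 0
    · left
      refine ⟨?_, ?_⟩
      · intro i
        rcases fin_tri hab i with h' | h' | h'
        · exact P3 hz i h'
        · rw [h']; exact hyb
        · exact hys i h'
      · intro i hcond
        push_neg at hcond
        obtain ⟨hai, hib⟩ := hcond
        have : b < i := by
          rw [Fin.lt_def]
          rw [Fin.lt_def] at hai
          have h2 : (i : ℕ) ≠ (b : ℕ) := fun e => hib (Fin.ext e)
          omega
        exact P4 hz i this
    · right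
      refine ⟨?_, ?_⟩
      · exact P2 (Nat.pos_of_ne_zero hyb)
      · intro i hi
        exact P3 hz i (not_lt.mp hi)

lemma std_psi_zero (hab : (a : ℕ) + 1 = (b : ℕ)) {v : MvPolynomial σn K}
    (hv : stdOK a b v) (h1 : psi1 K a b v = 0) (h2 : psi2 K a b v = 0)
    (h3 : psi3 K a b v = 0) : v = 0 := by
  have cS2 : ∀ m, Surv2 a b m → coeff m v = 0 := by
    intro m hm
    have e1 : coeff m (psi2 K a b v) = coeff m v := by
      conv_lhs => rw [as_sum v, map_sum, coeff_sum]
      rw [Finset.sum_eq_single m]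
      · by_cases hms : m ∈ v.support
        · rw [psi2_monomial_surv hm, coeff_monomial, if_pos rfl]
        · rw [MvPolynomial.notMem_support_iff.mp hms, monomial_zero, map_zero, coeff_zero]
      · intro m' _ hne
        by_cases hs : Surv2 a b m'
        · rw [psi2_monomial_surv hs, coeff_monomial, if_neg hne]
        · rw [psi2_monomial_kill hs, coeff_zero]
      · intro hms
        rw [MvPolynomial.notMem_support_iff.mp hms, monomial_zero, map_zero, coeff_zero]
    rw [← e1, h2, coeff_zero]
  have cS3 : ∀ m, Surv3 a b m → coeff m v = 0 := by
    intro m hm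
    have e1 : coeff m (psi3 K a b v) = coeff m v := by
      conv_lhs => rw [as_sum v, map_sum, coeff_sum]
      rw [Finset.sum_eq_single m]
      · by_cases hms : m ∈ v.support
        · rw [psi3_monomial_surv hm, coeff_monomial, if_pos rfl]
        · rw [MvPolynomial.notMem_support_iff.mp hms, monomial_zero, map_zero, coeff_zero]
      · intro m' _ hne
        by_cases hs : Surv3 a b m'
        · rw [psi3_monomial_surv hs, coeff_monomial, if_neg hne]
        · rw [psi3_monomial_kill hs, coeff_zero]
      · intro hms
        rw [MvPolynomial.notMem_support_iff.mp hms, monomial_zero, map_zero, coeff_zero]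
    rw [← e1, h3, coeff_zero]
  have hzfree : ∀ m ∈ v.support, m zc = 0 := by
    intro m hm
    by_contra hzz
    rcases std_z_surv hab (hv m hm) (Nat.pos_of_ne_zero hzz) with hs | hs
    · exact (MvPolynomial.mem_support_iff.mp hm) (cS2 m hs)
    · exact (MvPolynomial.mem_support_iff.mp hm) (cS3 m hs)
  by_contra hv0
  obtain ⟨m0, hm0⟩ := (MvPolynomial.support_nonempty.mpr hv0)
  have e1 : coeff (Wm a b m0) (psi1 K a b v) = coeff m0 v := by
    conv_lhs => rw [as_sum v, map_sum, coeff_sum]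
    rw [Finset.sum_eq_single m0]
    · rw [psi1_monomial, coeff_monomial, if_pos rfl]
    · intro m' hm' hne
      rw [psi1_monomial, coeff_monomial, if_neg]
      intro hW
      exact hne (Wm_inj hab (hv m' hm') (hv m0 hm0) (hzfree m' hm') (hzfree m0 hm0) hW)
    · intro hms
      exact absurd hm0 hms
  rw [h1, coeff_zero] at e1
  exact (MvPolynomial.mem_support_iff.mp hm0) e1.symm

lemma basis_mem (hab : (a : ℕ) + 1 = (b : ℕ)) {u : MvPolynomial σn K}
    (h1 : psi1 K a b u = 0) (h2 : psi2 K a b u = 0) (h3 : psi3 K a b u = 0) :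
    u ∈ IE K a b := by
  have hab' : a < b := by rw [Fin.lt_def]; omega
  obtain ⟨v, hv, hd⟩ := poly_reduce hab u
  have pv1 : psi1 K a b v = 0 := by
    have := psi1_vanish hab' hd
    rw [map_sub, h1] at this
    linear_combination (norm := ring_nf) -this
  have pv2 : psi2 K a b v = 0 := by
    have := psi2_vanish hab' hd
    rw [map_sub, h2] at this
    linear_combination (norm := ring_nf) -this
  have pv3 : psi3 K a b v = 0 := by
    have := psi3_vanish hab' hd
    rw [map_sub, h3] at this
    linear_combination (norm := ring_nf) -this
  have hv0 := std_psi_zero hab hv pv1 pv2 pv3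
  rw [hv0, sub_zero] at hd
  exact hd
  end LkAux
end Chunk12
section Chunk13
open MvPolynomial LkAux Finsupp

namespace LkAux
variable {K : Type*} [Field K] {n : ℕ}

local notation "σn" => (Fin n ⊕ Fin n ⊕ Unit)

lemma zv_eq : zv K n = zz K n := rfl

lemma xv_eq {i : ℕ} (h1 : 1 ≤ i) (h2 : i ≤ n) :
    xv K n i = xx K (⟨i - 1, by omega⟩ : Fin n) := by
  rw [xv, dif_pos ⟨h1, h2⟩]; rfl

lemma yv_eq {i : ℕ} (h1 : 1 ≤ i) (h2 : i ≤ n) :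
    yv K n i = yy K (⟨i - 1, by omega⟩ : Fin n) := by
  rw [yv, dif_pos ⟨h1, h2⟩]; rfl

lemma xv_fin (j : Fin n) : xv K n ((j : ℕ) + 1) = xx K j := by
  rw [xv, dif_pos ⟨by omega, Nat.succ_le_of_lt j.isLt⟩]
  exact congrArg X (congrArg Sum.inl (Fin.ext (by simp)))

lemma yv_fin (j : Fin n) : yv K n ((j : ℕ) + 1) = yy K j := by
  rw [yv, dif_pos ⟨by omega, Nat.succ_le_of_lt j.isLt⟩]
  exact congrArg X (congrArg (fun t => Sum.inr (Sum.inl t)) (Fin.ext (by simp)))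

variable {k : ℕ}

lemma memI_bin (i j : Fin n) (hij : i < j) :
    xx K j * yy K i - xx K i * yy K j ∈ LkIdeal K n k := by
  apply Ideal.subset_span
  left; left
  refine ⟨(i : ℕ) + 1, (j : ℕ) + 1, by omega, by rw [Fin.lt_def] at hij; omega,
    Nat.succ_le_of_lt j.isLt, ?_⟩
  rw [xv_fin, xv_fin, yv_fin, yv_fin]

lemma memI_zx (j : Fin n) (hj : k ≤ (j : ℕ)) :
    zz K n * xx K j - xv K n k * yy K j ∈ LkIdeal K n k := by
  apply Ideal.subset_span
  left; right
  exact ⟨(j : ℕ) + 1, by omega, Nat.succ_le_of_lt j.isLt,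
    by rw [← zv_eq, xv_fin, yv_fin]⟩

lemma memI_zy (i : Fin n) (hi : (i : ℕ) + 1 ≤ k) :
    zz K n * yy K i - xx K i * yv K n (k + 1) ∈ LkIdeal K n k := by
  apply Ideal.subset_span
  right
  exact ⟨(i : ℕ) + 1, by omega, hi, by rw [← zv_eq, xv_fin, yv_fin]⟩

end LkAux
end Chunk13
section Chunk14
open MvPolynomial LkAux Finsupp

namespace LkAux
variable {K : Type*} [Field K] {n : ℕ} {a b : Fin n}

local notation "σn" => (Fin n ⊕ Fin n ⊕ Unit)

lemma tau_X_sub (s : σn) : (X s : MvPolynomial σn K) - tauf K a b (X s) ∈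
    Ideal.span {xx K b - yy K a} := by
  rcases s with i | s
  · rw [show (X (Sum.inl i) : MvPolynomial σn K) = xx K i from rfl, tau_xx]
    by_cases hib : i = b
    · rw [if_pos hib, hib]
      exact Ideal.subset_span rfl
    · rw [if_neg hib, sub_self]
      exact Ideal.zero_mem _
  rcases s with i | u
  · rw [show (X (Sum.inr (Sum.inl i)) : MvPolynomial σn K) = yy K i from rfl, tau_yy, sub_self]
    exact Ideal.zero_mem _
  · cases u
    rw [show (X (Sum.inr (Sum.inr ())) : MvPolynomial σn K) = zz K n from rfl, tau_zz, sub_self]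
    exact Ideal.zero_mem _

lemma sub_tau_mem (f : MvPolynomial σn K) :
    f - tauf K a b f ∈ Ideal.span {xx K b - yy K a} := by
  induction f using MvPolynomial.induction_on with
  | C c =>
    have hc : tauf K a b (C c) = C c := by
      rw [show (C c : MvPolynomial σn K) = algebraMap K _ c from rfl, AlgHom.commutes]
      try rfl
    rw [hc, sub_self]
    exact Ideal.zero_mem _
  | add p q hp hq =>
    have := add_mem hp hq
    rw [map_add]
    convert this using 1
    ring
  | mul_X p s hp =>
    rw [map_mul]
    have h1 : p * X s - tauf K a b p * tauf K a b (X s) =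
        (p - tauf K a b p) * X s + tauf K a b p * (X s - tauf K a b (X s)) := by ring
    rw [h1]
    exact add_mem (Ideal.mul_mem_right _ _ hp) (Ideal.mul_mem_left _ _ (tau_X_sub s))

lemma tau_g_eq_zero : tauf K a b (xx K b - yy K a) = 0 := by
  rw [map_sub, tau_xx, tau_yy, if_pos rfl, sub_self]

variable {k : ℕ}

lemma xv_k_eq (hab : (a : ℕ) + 1 = (b : ℕ)) (hb : (b : ℕ) = k) : xv K n k = xx K a := by
  have h : k = (a : ℕ) + 1 := by omega
  rw [h, xv_fin]
lemma yv_k_eq (hab : (a : ℕ) + 1 = (b : ℕ)) (hb : (b : ℕ) = k) : yv K n k = yy K a := by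
  have h : k = (a : ℕ) + 1 := by omega
  rw [h, yv_fin]
lemma xv_k1_eq (hb : (b : ℕ) = k) : xv K n (k + 1) = xx K b := by
  rw [← hb, xv_fin]
lemma yv_k1_eq (hb : (b : ℕ) = k) : yv K n (k + 1) = yy K b := by
  rw [← hb, yv_fin]

lemma tau_I_le (hab : (a : ℕ) + 1 = (b : ℕ)) (hb : (b : ℕ) = k) {f : MvPolynomial σn K}
    (hf : f ∈ LkIdeal K n k) : tauf K a b f ∈ IE K a b := by
  have hne : a ≠ b := fun e => by rw [e] at hab; omega
  refine Submodule.span_induction ?_ ?_ ?_ ?_ hf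
  · rintro f ((⟨i, j, hi1, hij, hjn, rfl⟩ | ⟨j, hj1, hjn, rfl⟩) | ⟨i, hi1, hik, rfl⟩)
    · -- binomial
      set iF : Fin n := ⟨i - 1, by omega⟩ with hiF
      set jF : Fin n := ⟨j - 1, by omega⟩ with hjF
      have hij' : iF < jF := by rw [Fin.lt_def]; simp [hiF, hjF]; omega
      have exi : xv K n i = xx K iF := by rw [xv_eq hi1 (by omega)]
      have exj : xv K n j = xx K jF := by rw [xv_eq (by omega) hjn]
      have eyi : yv K n i = yy K iF := by rw [yv_eq hi1 (by omega)]
      have eyj : yv K n j = yy K jF := by rw [yv_eq (by omega) hjn]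
      rw [exi, exj, eyi, eyj, map_sub, map_mul, map_mul, tau_xx, tau_xx, tau_yy, tau_yy]
      by_cases hjb : jF = b
      · have hib : iF ≠ b := fun e => absurd hij' (by rw [e, hjb]; exact lt_irrefl _)
        rw [if_pos hjb, if_neg hib, hjb]
        exact mem_IE_E2 (by rw [Fin.le_def]; rw [Fin.lt_def, hjb] at hij'; omega)
      · by_cases hib : iF = b
        · rw [if_neg hjb, if_pos hib, hib]
          exact mem_IE_E3 (by rw [Fin.lt_def]; rw [Fin.lt_def, hib] at hij'; exact hij')
        · rw [if_neg hjb, if_neg hib]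
          exact mem_IE_E1 hij' hib hjb
    · -- z x_j - x_k y_j
      set jF : Fin n := ⟨j - 1, by omega⟩ with hjF
      have exj : xv K n j = xx K jF := by rw [xv_eq (by omega) hjn]
      have eyj : yv K n j = yy K jF := by rw [yv_eq (by omega) hjn]
      rw [exj, eyj, xv_k_eq hab hb, zv_eq, map_sub, map_mul, map_mul, tau_zz, tau_xx, tau_xx,
        tau_yy, if_neg hne]
      by_cases hjb : jF = b
      · rw [if_pos hjb, hjb]
        exact mem_IE_E5 le_rfl
      · rw [if_neg hjb]
        have : b < jF := by
          rw [Fin.lt_def]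
          have : (jF : ℕ) ≠ (b : ℕ) := fun e => hjb (Fin.ext e)
          simp only [hjF] at this ⊢
          omega
        exact mem_IE_E4 this
    · -- z y_i - x_i y_{k+1}
      set iF : Fin n := ⟨i - 1, by omega⟩ with hiF
      have exi : xv K n i = xx K iF := by rw [xv_eq hi1 (by omega)]
      have eyi : yv K n i = yy K iF := by rw [yv_eq hi1 (by omega)]
      have hia : iF ≤ a := by rw [Fin.le_def]; simp only [hiF]; omega
      have hib : iF ≠ b := fun e => by
        rw [Fin.ext_iff] at e
        simp only [hiF] at e
        omega
      rw [exi, eyi, yv_k1_eq hb, zv_eq, map_sub, map_mul, map_mul, tau_zz, tau_yy, tau_xx,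
        tau_yy, if_neg hib]
      exact mem_IE_E5 hia
  · simp
  · intro p q _ _ hp hq
    rw [map_add]
    exact add_mem hp hq
  · intro r p _ hp
    rw [smul_eq_mul, map_mul]
    exact Ideal.mul_mem_left _ _ hp

end LkAux
end Chunk14
section Chunk15
open MvPolynomial LkAux Finsupp

namespace LkAux
variable {K : Type*} [Field K] {n : ℕ} {a b : Fin n} {k : ℕ}

local notation "σn" => (Fin n ⊕ Fin n ⊕ Unit)

lemma IE_le_J1 (hab : (a : ℕ) + 1 = (b : ℕ)) (hb : (b : ℕ) = k) :
    IE K a b ≤ LkIdeal K n k ⊔ Ideal.span {xx K b - yy K a} := by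
  have hab' : a < b := by rw [Fin.lt_def]; omega
  rw [IE, Ideal.span_le]
  rintro f (⟨i, j, hij, hi, hj, rfl⟩ | ⟨i, hi, rfl⟩ | ⟨j, hj, rfl⟩ | ⟨j, hj, rfl⟩ |
    ⟨i, hi, rfl⟩)
  · exact Ideal.mem_sup_left (memI_bin i j hij)
  · have h1 : yy K a * yy K i - xx K i * yy K b =
        (xx K b * yy K i - xx K i * yy K b) + (-(yy K i)) * (xx K b - yy K a) := by ring
    rw [h1]
    exact add_mem (Ideal.mem_sup_left (memI_bin i b (lt_of_le_of_lt hi hab')))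
      (Ideal.mem_sup_right (Ideal.mul_mem_left _ _ (Ideal.subset_span rfl)))
  · have h1 : xx K j * yy K b - yy K a * yy K j =
        (xx K j * yy K b - xx K b * yy K j) + (yy K j) * (xx K b - yy K a) := by ring
    rw [h1]
    exact add_mem (Ideal.mem_sup_left (memI_bin b j hj))
      (Ideal.mem_sup_right (Ideal.mul_mem_left _ _ (Ideal.subset_span rfl)))
  · rw [← xv_k_eq hab hb]
    exact Ideal.mem_sup_left (memI_zx j (by rw [Fin.lt_def] at hj; omega))
  · rw [← yv_k1_eq hb]
    exact Ideal.mem_sup_left (memI_zy i (by rw [Fin.le_def] at hi; omega))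

lemma zg_mem (hab : (a : ℕ) + 1 = (b : ℕ)) (hb : (b : ℕ) = k) :
    zz K n * (xx K b - yy K a) ∈ LkIdeal K n k := by
  have h1 : zz K n * xx K b - xv K n k * yy K b ∈ LkIdeal K n k := memI_zx b (by omega)
  have h2 : zz K n * yy K a - xx K a * yv K n (k + 1) ∈ LkIdeal K n k :=
    memI_zy a (by omega)
  have h3 := sub_mem h1 h2
  have h4 : zz K n * (xx K b - yy K a) =
      (zz K n * xx K b - xv K n k * yy K b) - (zz K n * yy K a - xx K a * yv K n (k + 1)) := by
    rw [xv_k_eq hab hb, yv_k1_eq hb]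
    ring
  rw [h4]
  exact h3

end LkAux

open LkAux in
theorem LkIdeal_eq_inter' (K : Type*) [Field K] (n k : ℕ)
    (hn : 2 ≤ n) (hk1 : 1 ≤ k) (hk2 : k ≤ n - 1) :
    LkIdeal K n k =
      (LkIdeal K n k ⊔ Ideal.span {xv K n (k + 1) - yv K n k}) ⊓
        (LkIdeal K n k ⊔ Ideal.span {zv K n}) := by
  have hkn : k < n := by omega
  set a : Fin n := ⟨k - 1, by omega⟩ with ha
  set b : Fin n := ⟨k, hkn⟩ with hbv
  have hab : (a : ℕ) + 1 = (b : ℕ) := by simp [ha, hbv]; omega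
  have hb : (b : ℕ) = k := rfl
  have hg : xv K n (k + 1) - yv K n k = xx K b - yy K a := by
    rw [xv_k1_eq hb, yv_k_eq hab hb]
  rw [hg]
  apply le_antisymm
  · exact le_inf le_sup_left le_sup_left
  intro f hf
  rw [Submodule.mem_inf] at hf
  obtain ⟨hf1, hf2⟩ := hf
  obtain ⟨p, hp, q, hq, hfe⟩ := Submodule.mem_sup.mp hf2
  obtain ⟨t, ht⟩ := Ideal.mem_span_singleton'.mp hq
  have htz : t * zv K n ∈ LkIdeal K n k ⊔ Ideal.span {xx K b - yy K a} := by
    have hpJ : p ∈ LkIdeal K n k ⊔ Ideal.span {xx K b - yy K a} := Ideal.mem_sup_left hp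
    have hsub := sub_mem hf1 hpJ
    have : f - p = t * zv K n := by rw [← hfe, ht]; ring
    rwa [this] at hsub
  have h1 : tauf K a b (t * zv K n) ∈ IE K a b := by
    obtain ⟨p', hp', q', hq', hsum⟩ := Submodule.mem_sup.mp htz
    obtain ⟨s, hs⟩ := Ideal.mem_span_singleton'.mp hq'
    rw [← hsum, map_add]
    apply add_mem (tau_I_le hab hb hp')
    rw [← hs, map_mul, tau_g_eq_zero, mul_zero]
    exact Ideal.zero_mem _
  rw [map_mul, zv_eq, tau_zz] at h1
  have hab' : a < b := by rw [Fin.lt_def]; omega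
  have e1 : psi1 K a b (tauf K a b t) = 0 := by
    have h2 := psi1_vanish hab' h1
    rw [map_mul] at h2
    rcases mul_eq_zero.mp h2 with h3 | h3
    · exact h3
    · exfalso
      rw [show zz K n = X zc from rfl, psi1_X] at h3
      exact one_ne_zero (monomial_eq_zero.mp h3)
  have e2 : psi2 K a b (tauf K a b t) = 0 := by
    have h2 := psi2_vanish hab' h1
    rw [map_mul, psi2_zz] at h2
    rcases mul_eq_zero.mp h2 with h3 | h3
    · exact h3
    · exact absurd h3 (X_ne_zero zc)
  have e3 : psi3 K a b (tauf K a b t) = 0 := by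
    have h2 := psi3_vanish hab' h1
    rw [map_mul, psi3_zz] at h2
    rcases mul_eq_zero.mp h2 with h3 | h3
    · exact h3
    · exact absurd h3 (X_ne_zero zc)
  have hu : tauf K a b t ∈ IE K a b := basis_mem hab e1 e2 e3
  have htJ : t ∈ LkIdeal K n k ⊔ Ideal.span {xx K b - yy K a} := by
    have h2 := sub_tau_mem (a := a) (b := b) t
    have h3 : t = (t - tauf K a b t) + tauf K a b t := by ring
    rw [h3]
    exact add_mem (Ideal.mem_sup_right h2) (IE_le_J1 hab hb hu)
  obtain ⟨p', hp', q', hq', hsum⟩ := Submodule.mem_sup.mp htJ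
  obtain ⟨s, hs⟩ := Ideal.mem_span_singleton'.mp hq'
  have htzI : t * zv K n ∈ LkIdeal K n k := by
    have hzg := zg_mem (K := K) (k := k) hab hb
    have hexp : t * zv K n = p' * zv K n + s * (zz K n * (xx K b - yy K a)) := by
      rw [← hsum, ← hs, zv_eq]
      ring
    rw [hexp]
    exact add_mem (Ideal.mul_mem_right _ _ hp') (Ideal.mul_mem_left _ _ hzg)
  have : f = p + t * zv K n := by rw [← hfe, ht]
  rw [this]
  exact add_mem hp htzI
end Chunk15

/-- **Lemma.** For every `1 ≤ k ≤ n−1`, `I = (I + (x_{k+1} − y_k)) ∩ (I + (z))` where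
`I = I_{L_k}`. -/
theorem LkIdeal_eq_inter (K : Type*) [Field K] (n k : ℕ)
    (hn : 2 ≤ n) (hk1 : 1 ≤ k) (hk2 : k ≤ n - 1) :
    LkIdeal K n k =
      (LkIdeal K n k ⊔ Ideal.span {xv K n (k + 1) - yv K n k}) ⊓
        (LkIdeal K n k ⊔ Ideal.span {zv K n}) :=
  LkIdeal_eq_inter' K n k hn hk1 hk2
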